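/- Let F be a field that is not the field with 2 elements, and let V ⊆ F^{n×n} and V' ⊆ F^{n'×n'} be linear subspaces of pairwise commuting matrices, each containing a nonsingular matrix. Then the following are equivalent: (i) the Lie algebras L(V) and L(V') are isomorphic; (ii) n = n' and there exists a nonsingular n×n matrix S with SVS^{-1} = V'; (iii) n = n' and there exists a nonsingular (n+1)×(n+1) matrix R with RṼR^{-1} = Ṽ'. -/

import Mathlib

/-- The `(n+1) × (n+1)` matrix `(A|a)` whose top-left `n × n` block is `A`,
whose last column has the entries of the vector `a` followed by `0`, and whose
last row is zero.  Rows and columns are indexed by `Fin n ⊕ Fin 1`. -/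
def Mext {F : Type*} [Field F] {n : ℕ} (A : Matrix (Fin n) (Fin n) F)
    (a : Fin n → F) : Matrix (Fin n ⊕ Fin 1) (Fin n ⊕ Fin 1) F :=
  Matrix.fromBlocks A (Matrix.of fun i _ => a i) 0 0

theorem Mext_add {F : Type*} [Field F] {n : ℕ}
    (A B : Matrix (Fin n) (Fin n) F) (a b : Fin n → F) :
    Mext A a + Mext B b = Mext (A + B) (a + b) := by
  ext (i | i) (j | j) <;>
    simp [Mext, Matrix.fromBlocks, Matrix.add_apply]

theorem Mext_smul {F : Type*} [Field F] {n : ℕ} (c : F)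
    (A : Matrix (Fin n) (Fin n) F) (a : Fin n → F) :
    c • Mext A a = Mext (c • A) (c • a) := by
  ext (i | i) (j | j) <;>
    simp [Mext, Matrix.fromBlocks, Matrix.smul_apply]

theorem Mext_mul {F : Type*} [Field F] {n : ℕ}
    (A B : Matrix (Fin n) (Fin n) F) (a b : Fin n → F) :
    Mext A a * Mext B b = Mext (A * B) (A.mulVec b) := by
  ext (i | i) (j | j) <;>
    simp [Mext, Matrix.mul_apply, Fintype.sum_sum_type,
      Matrix.fromBlocks, Matrix.mulVec, dotProduct]

/-- The set `Ṽ` of all `(n+1) × (n+1)` matrices `(A|a)` with `A ∈ V`,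
`a ∈ Fⁿ`. -/
def VtSet {F : Type*} [Field F] {n : ℕ}
    (V : Submodule F (Matrix (Fin n) (Fin n) F)) :
    Set (Matrix (Fin n ⊕ Fin 1) (Fin n ⊕ Fin 1) F) :=
  {M | ∃ A ∈ V, ∃ a : Fin n → F, M = Mext A a}

attribute [local instance 100] LieRing.ofAssociativeRing

/-- For a subspace `V` of pairwise commuting `n × n` matrices, the Lie algebra
`L(V) = Ṽ` of all matrices `(A|a)` (`A ∈ V`, `a ∈ Fⁿ`), a Lie subalgebra of
the `(n+1) × (n+1)` matrices with the commutator bracket. -/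
def LV {F : Type*} [Field F] {n : ℕ}
    (V : Submodule F (Matrix (Fin n) (Fin n) F))
    (hV : ∀ A ∈ V, ∀ B ∈ V, A * B = B * A) :
    LieSubalgebra F (Matrix (Fin n ⊕ Fin 1) (Fin n ⊕ Fin 1) F) where
  carrier := VtSet V
  add_mem' := by
    rintro x y ⟨A, hA, a, rfl⟩ ⟨B, hB, b, rfl⟩
    exact ⟨A + B, V.add_mem hA hB, a + b, Mext_add A B a b⟩
  zero_mem' := by
    refine ⟨0, V.zero_mem, 0, ?_⟩
    ext (i | i) (j | j) <;> simp [Mext, Matrix.fromBlocks]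
  smul_mem' := by
    rintro c x ⟨A, hA, a, rfl⟩
    exact ⟨c • A, V.smul_mem c hA, c • a, Mext_smul c A a⟩
  lie_mem' := by
    rintro x y ⟨A, hA, a, rfl⟩ ⟨B, hB, b, rfl⟩
    refine ⟨0, V.zero_mem, A.mulVec b - B.mulVec a, ?_⟩
    rw [Ring.lie_def, Mext_mul, Mext_mul, hV A hA B hB]
    ext (i | i) (j | j) <;>
      simp [Mext, Matrix.fromBlocks, Matrix.sub_apply, Pi.sub_apply]
section Helpers

variable {F : Type*} [Field F] {n n' : ℕ}

/-- Top-left `n × n` block. -/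
def matPart (M : Matrix (Fin n ⊕ Fin 1) (Fin n ⊕ Fin 1) F) :
    Matrix (Fin n) (Fin n) F :=
  Matrix.of fun i j => M (Sum.inl i) (Sum.inl j)

/-- Last-column vector part. -/
def vecPart (M : Matrix (Fin n ⊕ Fin 1) (Fin n ⊕ Fin 1) F) : Fin n → F :=
  fun i => M (Sum.inl i) (Sum.inr 0)

@[simp] lemma matPart_Mext (A : Matrix (Fin n) (Fin n) F) (a : Fin n → F) :
    matPart (Mext A a) = A := rfl

@[simp] lemma vecPart_Mext (A : Matrix (Fin n) (Fin n) F) (a : Fin n → F) :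
    vecPart (Mext A a) = a := rfl

lemma Mext_sub (A B : Matrix (Fin n) (Fin n) F) (a b : Fin n → F) :
    Mext A a - Mext B b = Mext (A - B) (a - b) := by
  ext (i | i) (j | j) <;>
    simp [Mext, Matrix.fromBlocks, Matrix.sub_apply, Pi.sub_apply]

@[simp] lemma Mext_zero : (Mext (0 : Matrix (Fin n) (Fin n) F) 0) = 0 := by
  ext (i | i) (j | j) <;> simp [Mext, Matrix.fromBlocks]
section Helpers2

variable {F : Type*} [Field F] {n n' : ℕ}
  {V : Submodule F (Matrix (Fin n) (Fin n) F)}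
  {V' : Submodule F (Matrix (Fin n') (Fin n') F)}
  {hV : ∀ A ∈ V, ∀ B ∈ V, A * B = B * A}
  {hV' : ∀ A ∈ V', ∀ B ∈ V', A * B = B * A}

/-- `a ↦ (0|a)` as a linear map into `L(V)`. -/
def mz (V : Submodule F (Matrix (Fin n) (Fin n) F))
    (hV : ∀ A ∈ V, ∀ B ∈ V, A * B = B * A) :
    (Fin n → F) →ₗ[F] (LV V hV) where
  toFun a := ⟨Mext 0 a, ⟨0, V.zero_mem, a, rfl⟩⟩
  map_add' a b := Subtype.ext <| by
    show Mext 0 (a + b) = Mext 0 a + Mext 0 b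
    rw [Mext_add, add_zero]
  map_smul' c a := Subtype.ext <| by
    show Mext 0 (c • a) = c • Mext 0 a
    rw [Mext_smul, smul_zero]

@[simp] lemma mz_val (a : Fin n → F) : (mz V hV a).val = Mext 0 a := rfl

lemma val_eq_Mext (x : LV V hV) :
    x.val = Mext (matPart x.val) (vecPart x.val) := by
  obtain ⟨A, hA, a, hx⟩ := x.2
  rw [hx]; simp

lemma matPart_mem (x : LV V hV) : matPart x.val ∈ V := by
  obtain ⟨A, hA, a, hx⟩ := x.2
  rw [hx]; simpa using hA

lemma bracket_val (x y : LV V hV) :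
    (⁅x, y⁆ : LV V hV).val
      = Mext 0 ((matPart x.val).mulVec (vecPart y.val)
          - (matPart y.val).mulVec (vecPart x.val)) := by
  have hx := val_eq_Mext x
  have hy := val_eq_Mext y
  set A := matPart x.val
  set B := matPart y.val
  set a := vecPart x.val
  set b := vecPart y.val
  have : (⁅x, y⁆ : LV V hV).val = ⁅x.val, y.val⁆ := rfl
  rw [this, Ring.lie_def, hx, hy, Mext_mul, Mext_mul,
    hV A (matPart_mem x) B (matPart_mem y), Mext_sub, sub_self]
/-- The linear map `Fⁿ → Fⁿ'` induced by a Lie algebra isomorphism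
`L(V) ≃ L(V')` on the "vector parts". -/
def fL (e : (LV V hV) ≃ₗ⁅F⁆ (LV V' hV')) : (Fin n → F) →ₗ[F] (Fin n' → F) where
  toFun a := vecPart (e (mz V hV a)).val
  map_add' a b := by
    have h1 : e (mz V hV (a + b)) = e (mz V hV a) + e (mz V hV b) := by
      rw [(mz V hV).map_add]
      exact e.toLinearEquiv.map_add _ _
    funext i
    show vecPart (e (mz V hV (a + b))).val i
      = vecPart (e (mz V hV a)).val i + vecPart (e (mz V hV b)).val i
    rw [h1]
    rfl
  map_smul' c a := by
    have h1 : e (mz V hV (c • a)) = c • e (mz V hV a) := by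
      rw [(mz V hV).map_smul]
      exact e.toLinearEquiv.map_smul _ _
    funext i
    show vecPart (e (mz V hV (c • a))).val i = c • (vecPart (e (mz V hV a)).val i)
    rw [h1]
    rfl

lemma mz_apply_e (e : (LV V hV) ≃ₗ⁅F⁆ (LV V' hV'))
    (hns : ∃ A ∈ V, IsUnit A) (a : Fin n → F) :
    e (mz V hV a) = mz V' hV' (fL e a) := by
  obtain ⟨A₀, hA₀, hu⟩ := hns
  have hud : IsUnit A₀.det := (Matrix.isUnit_iff_isUnit_det A₀).mp hu
  set x : LV V hV := ⟨Mext A₀ 0, ⟨A₀, hA₀, 0, rfl⟩⟩ with hxdef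
  set y := mz V hV (A₀⁻¹.mulVec a) with hydef
  have hb : ⁅x, y⁆ = mz V hV a := by
    apply Subtype.ext
    rw [bracket_val]
    show Mext 0 _ = Mext 0 a
    have h1 : matPart x.val = A₀ := rfl
    have h2 : vecPart x.val = 0 := rfl
    have h3 : matPart y.val = 0 := rfl
    have h4 : vecPart y.val = A₀⁻¹.mulVec a := rfl
    rw [h1, h2, h3, h4, Matrix.mulVec_mulVec, Matrix.mul_nonsing_inv A₀ hud,
      Matrix.one_mulVec, Matrix.zero_mulVec, sub_zero]
  have he : e (mz V hV a) = ⁅e x, e y⁆ := by rw [← hb, e.map_lie]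
  apply Subtype.ext
  show (e (mz V hV a)).val = Mext 0 (fL e a)
  have : fL e a = vecPart (e (mz V hV a)).val := rfl
  rw [this, he, bracket_val]
  rw [vecPart_Mext]
lemma fL_symm_fL (e : (LV V hV) ≃ₗ⁅F⁆ (LV V' hV'))
    (hns : ∃ A ∈ V, IsUnit A) (a : Fin n → F) :
    fL e.symm (fL e a) = a := by
  have h1 : e.symm (mz V' hV' (fL e a)) = mz V hV a := by
    rw [← mz_apply_e e hns a, e.symm_apply_apply]
  show vecPart (e.symm (mz V' hV' (fL e a))).val = a
  rw [h1]
  rfl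

/-- The linear equivalence `Fⁿ ≃ Fⁿ'` induced by a Lie algebra isomorphism. -/
def Tlin (e : (LV V hV) ≃ₗ⁅F⁆ (LV V' hV'))
    (hns : ∃ A ∈ V, IsUnit A) (hns' : ∃ A ∈ V', IsUnit A) :
    (Fin n → F) ≃ₗ[F] (Fin n' → F) :=
  LinearEquiv.ofLinear (fL e) (fL e.symm)
    (by
      apply LinearMap.ext
      intro b
      have := fL_symm_fL e.symm hns' b
      rw [LieEquiv.symm_symm] at this
      simpa using this)
    (by
      apply LinearMap.ext
      intro a
      simpa using fL_symm_fL e hns a)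

lemma intertwine (e : (LV V hV) ≃ₗ⁅F⁆ (LV V' hV'))
    (hns : ∃ A ∈ V, IsUnit A) (x : LV V hV) (b : Fin n → F) :
    (matPart (e x).val).mulVec (fL e b) = fL e ((matPart x.val).mulVec b) := by
  have h1 : ⁅x, mz V hV b⁆ = mz V hV ((matPart x.val).mulVec b) := by
    apply Subtype.ext
    rw [bracket_val]
    show Mext 0 _ = Mext 0 _
    have h2 : matPart (mz V hV b).val = 0 := rfl
    have h3 : vecPart (mz V hV b).val = b := rfl
    rw [h2, h3, Matrix.zero_mulVec, sub_zero]
  have h4 : ⁅e x, mz V' hV' (fL e b)⁆ = mz V' hV' (fL e ((matPart x.val).mulVec b)) := by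
    rw [← mz_apply_e e hns, ← mz_apply_e e hns, ← e.map_lie, h1]
  have h5 := congrArg (fun z => vecPart (Subtype.val z)) h4
  rw [bracket_val] at h5
  have h6 : matPart (mz V' hV' (fL e b)).val = 0 := rfl
  have h7 : vecPart (mz V' hV' (fL e b)).val = fL e b := rfl
  rw [h6, h7] at h5
  simpa [Matrix.zero_mulVec] using h5
lemma iso_to_ii (hns : ∃ A ∈ V, IsUnit A) (hns' : ∃ A ∈ V', IsUnit A)
    (e : (LV V hV) ≃ₗ⁅F⁆ (LV V' hV')) :
    ∃ h : n = n', ∃ S : Matrix (Fin n') (Fin n') F, IsUnit S ∧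
      (fun A => S * (Matrix.reindex (finCongr h) (finCongr h) A) * S⁻¹) '' ↑V
        = (↑V' : Set (Matrix (Fin n') (Fin n') F)) := by
  have h : n = n' := by
    have h1 := (Tlin e hns hns').finrank_eq
    simpa [Module.finrank_fin_fun] using h1
  subst h
  set T := Tlin e hns hns' with hT
  set S := LinearMap.toMatrix' (T : (Fin n → F) →ₗ[F] (Fin n → F)) with hS
  set S' := LinearMap.toMatrix' (T.symm : (Fin n → F) →ₗ[F] (Fin n → F)) with hS'
  have hSS' : S * S' = 1 := by
    rw [hS, hS', ← LinearMap.toMatrix'_comp]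
    have h2 : (T : (Fin n → F) →ₗ[F] (Fin n → F)) ∘ₗ (T.symm : (Fin n → F) →ₗ[F] (Fin n → F))
        = LinearMap.id := by
      apply LinearMap.ext; intro v; simp
    rw [h2, LinearMap.toMatrix'_id]
  have hS'S : S' * S = 1 := by
    rw [hS, hS', ← LinearMap.toMatrix'_comp]
    have h2 : (T.symm : (Fin n → F) →ₗ[F] (Fin n → F)) ∘ₗ (T : (Fin n → F) →ₗ[F] (Fin n → F))
        = LinearMap.id := by
      apply LinearMap.ext; intro v; simp
    rw [h2, LinearMap.toMatrix'_id]
  have hU : IsUnit S := ⟨⟨S, S', hSS', hS'S⟩, rfl⟩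
  have hinv : S⁻¹ = S' := Matrix.inv_eq_right_inv hSS'
  have hTa : ∀ a, T a = fL e a := fun a => rfl
  have key : ∀ x : LV V hV, S * matPart x.val * S⁻¹ = matPart (e x).val := by
    intro x
    rw [hinv]
    have hlin : (T : (Fin n → F) →ₗ[F] (Fin n → F)) ∘ₗ (Matrix.toLin' (matPart x.val)) ∘ₗ
        (T.symm : (Fin n → F) →ₗ[F] (Fin n → F)) = Matrix.toLin' (matPart (e x).val) := by
      apply LinearMap.ext
      intro v
      show T (Matrix.toLin' (matPart x.val) (T.symm v)) = _
      rw [Matrix.toLin'_apply, Matrix.toLin'_apply]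
      have hsymm : fL e (T.symm v) = v := by
        calc fL e (T.symm v) = T (T.symm v) := (hTa _).symm
          _ = v := T.apply_symm_apply v
      rw [hTa, ← intertwine e hns x (T.symm v), hsymm]
    calc S * matPart x.val * S'
        = LinearMap.toMatrix' ((T : (Fin n → F) →ₗ[F] (Fin n → F)) ∘ₗ
            (Matrix.toLin' (matPart x.val)) ∘ₗ (T.symm : (Fin n → F) →ₗ[F] (Fin n → F))) := by
          rw [LinearMap.toMatrix'_comp, LinearMap.toMatrix'_comp, LinearMap.toMatrix'_toLin',
            ← hS, ← hS', Matrix.mul_assoc]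
      _ = matPart (e x).val := by rw [hlin, LinearMap.toMatrix'_toLin']
  refine ⟨rfl, S, hU, ?_⟩
  ext B
  simp only [Set.mem_image, SetLike.mem_coe, finCongr_refl, Matrix.reindex_refl_refl]
  constructor
  · rintro ⟨A, hA, rfl⟩
    have hk := key ⟨Mext A 0, ⟨A, hA, 0, rfl⟩⟩
    rw [show matPart ((⟨Mext A 0, ⟨A, hA, 0, rfl⟩⟩ : LV V hV)).val = A from rfl] at hk
    rw [hk]
    exact matPart_mem _
  · intro hB
    refine ⟨matPart ((e.symm ⟨Mext B 0, ⟨B, hB, 0, rfl⟩⟩).val), matPart_mem _, ?_⟩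
    have hk := key (e.symm ⟨Mext B 0, ⟨B, hB, 0, rfl⟩⟩)
    rw [e.apply_symm_apply] at hk
    rw [hk]
    rfl
lemma iii_to_i
    (hiii : ∃ h : n = n', ∃ R : Matrix (Fin n' ⊕ Fin 1) (Fin n' ⊕ Fin 1) F,
        IsUnit R ∧
        (fun X => R *
            (Matrix.reindex (Equiv.sumCongr (finCongr h) (Equiv.refl (Fin 1)))
              (Equiv.sumCongr (finCongr h) (Equiv.refl (Fin 1))) X) * R⁻¹) ''
          VtSet V = VtSet V') :
    Nonempty ((LV V hV) ≃ₗ⁅F⁆ (LV V' hV')) := by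
  obtain ⟨h, R, hR, himg⟩ := hiii
  subst h
  simp only [finCongr_refl, Equiv.sumCongr_refl, Matrix.reindex_refl_refl] at himg
  have hd := (Matrix.isUnit_iff_isUnit_det R).mp hR
  have h1 : R * R⁻¹ = 1 := Matrix.mul_nonsing_inv R hd
  have h2 : R⁻¹ * R = 1 := Matrix.nonsing_inv_mul R hd
  have hcan1 : ∀ X : Matrix (Fin n ⊕ Fin 1) (Fin n ⊕ Fin 1) F,
      R⁻¹ * (R * X * R⁻¹) * R = X := by
    intro X
    simp only [← Matrix.mul_assoc]
    rw [h2, Matrix.one_mul, Matrix.mul_assoc, h2, Matrix.mul_one]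
  have hcan2 : ∀ X : Matrix (Fin n ⊕ Fin 1) (Fin n ⊕ Fin 1) F,
      R * (R⁻¹ * X * R) * R⁻¹ = X := by
    intro X
    simp only [← Matrix.mul_assoc]
    rw [h1, Matrix.one_mul, Matrix.mul_assoc, h1, Matrix.mul_one]
  have fwd : ∀ X ∈ VtSet V, R * X * R⁻¹ ∈ VtSet V' := by
    intro X hX
    rw [← himg]
    exact ⟨X, hX, rfl⟩
  have bwd : ∀ Y ∈ VtSet V', R⁻¹ * Y * R ∈ VtSet V := by
    intro Y hY
    rw [← himg] at hY
    obtain ⟨X, hX, rfl⟩ := hY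
    rw [hcan1]
    exact hX
  have hc : ∀ X Y : Matrix (Fin n ⊕ Fin 1) (Fin n ⊕ Fin 1) F,
      (R * X * R⁻¹) * (R * Y * R⁻¹) = R * (X * Y) * R⁻¹ := by
    intro X Y
    simp only [← Matrix.mul_assoc]
    rw [Matrix.mul_assoc (R * X) R⁻¹ R, h2, Matrix.mul_one]
  exact ⟨{
    toFun := fun x => ⟨R * x.val * R⁻¹, fwd x.val x.2⟩
    map_add' := fun x y => Subtype.ext <| by
      show R * (x.val + y.val) * R⁻¹ = R * x.val * R⁻¹ + R * y.val * R⁻¹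
      rw [Matrix.mul_add, Matrix.add_mul]
    map_smul' := fun c x => Subtype.ext <| by
      show R * (c • x.val) * R⁻¹ = c • (R * x.val * R⁻¹)
      rw [Matrix.mul_smul, Matrix.smul_mul]
    map_lie' := fun {x y} => Subtype.ext <| by
      show R * ⁅x.val, y.val⁆ * R⁻¹ = ⁅R * x.val * R⁻¹, R * y.val * R⁻¹⁆
      rw [Ring.lie_def, Ring.lie_def, hc, hc]; noncomm_ring
    invFun := fun y => ⟨R⁻¹ * y.val * R, bwd y.val y.2⟩
    left_inv := fun x => Subtype.ext <| by
      show R⁻¹ * (R * x.val * R⁻¹) * R = x.val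
      exact hcan1 _
    right_inv := fun y => Subtype.ext <| by
      show R * (R⁻¹ * y.val * R) * R⁻¹ = y.val
      exact hcan2 _ }⟩
lemma ii_to_iii
    (hii : ∃ h : n = n', ∃ S : Matrix (Fin n') (Fin n') F, IsUnit S ∧
        (fun A => S * (Matrix.reindex (finCongr h) (finCongr h) A) * S⁻¹) '' ↑V
          = (↑V' : Set (Matrix (Fin n') (Fin n') F))) :
    ∃ h : n = n', ∃ R : Matrix (Fin n' ⊕ Fin 1) (Fin n' ⊕ Fin 1) F,
      IsUnit R ∧
      (fun X => R *
          (Matrix.reindex (Equiv.sumCongr (finCongr h) (Equiv.refl (Fin 1)))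
            (Equiv.sumCongr (finCongr h) (Equiv.refl (Fin 1))) X) * R⁻¹) ''
        VtSet V = VtSet V' := by
  obtain ⟨h, S, hS, himg⟩ := hii
  subst h
  simp only [finCongr_refl, Matrix.reindex_refl_refl] at himg
  have hd := (Matrix.isUnit_iff_isUnit_det S).mp hS
  have h1 : S * S⁻¹ = 1 := Matrix.mul_nonsing_inv S hd
  have h2 : S⁻¹ * S = 1 := Matrix.nonsing_inv_mul S hd
  set R := Matrix.fromBlocks S (0 : Matrix (Fin n) (Fin 1) F)
    (0 : Matrix (Fin 1) (Fin n) F) (1 : Matrix (Fin 1) (Fin 1) F) with hRdef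
  set R' := Matrix.fromBlocks S⁻¹ (0 : Matrix (Fin n) (Fin 1) F)
    (0 : Matrix (Fin 1) (Fin n) F) (1 : Matrix (Fin 1) (Fin 1) F) with hR'def
  have hprod : R * R' = 1 := by
    rw [hRdef, hR'def, Matrix.fromBlocks_multiply]
    simp [h1, Matrix.fromBlocks_one]
  have hprod' : R' * R = 1 := by
    rw [hRdef, hR'def, Matrix.fromBlocks_multiply]
    simp [h2, Matrix.fromBlocks_one]
  have hRinv : R⁻¹ = R' := Matrix.inv_eq_right_inv hprod
  have hcol : ∀ (M : Matrix (Fin n) (Fin n) F) (a : Fin n → F),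
      M * (Matrix.of fun i (_ : Fin 1) => a i)
        = Matrix.of fun i (_ : Fin 1) => M.mulVec a i := by
    intro M a
    ext i j
    simp [Matrix.mul_apply, Matrix.mulVec, dotProduct]
  have hconj : ∀ (A : Matrix (Fin n) (Fin n) F) (a : Fin n → F),
      R * Mext A a * R⁻¹ = Mext (S * A * S⁻¹) (S.mulVec a) := by
    intro A a
    rw [hRinv, hRdef, hR'def]
    show Matrix.fromBlocks S 0 0 1 *
        Matrix.fromBlocks A (Matrix.of fun i _ => a i) 0 0 * Matrix.fromBlocks S⁻¹ 0 0 1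
      = Matrix.fromBlocks (S * A * S⁻¹) (Matrix.of fun i _ => (S.mulVec a) i) 0 0
    rw [Matrix.fromBlocks_multiply, Matrix.fromBlocks_multiply]
    simp [hcol]
  refine ⟨rfl, R, ⟨⟨R, R', hprod, hprod'⟩, rfl⟩, ?_⟩
  simp only [finCongr_refl, Equiv.sumCongr_refl, Matrix.reindex_refl_refl]
  ext Y
  constructor
  · rintro ⟨X, ⟨A, hA, a, rfl⟩, rfl⟩
    have hmem : S * A * S⁻¹ ∈ (V' : Set (Matrix (Fin n) (Fin n) F)) := by
      rw [← himg]; exact ⟨A, hA, rfl⟩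
    exact ⟨S * A * S⁻¹, hmem, S.mulVec a, hconj A a⟩
  · rintro ⟨B, hB, b, rfl⟩
    have hB' : B ∈ (V' : Set (Matrix (Fin n) (Fin n) F)) := hB
    rw [← himg] at hB'
    obtain ⟨A, hA, hAB⟩ := hB'
    simp only at hAB
    refine ⟨Mext A (S⁻¹.mulVec b), ⟨A, hA, S⁻¹.mulVec b, rfl⟩, ?_⟩
    show R * Mext A (S⁻¹.mulVec b) * R⁻¹ = Mext B b
    rw [hconj, hAB, Matrix.mulVec_mulVec, h1, Matrix.one_mulVec]
end Helpers2
end Helpers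


/-- For a field `F` with more than `2` elements and subspaces `V ⊆ Fⁿˣⁿ`,
`V' ⊆ Fⁿ'ˣⁿ'` of pairwise commuting matrices containing nonsingular matrices,
the following are equivalent: (i) the Lie algebras `L(V)` and `L(V')` are
isomorphic; (ii) `n = n'` and `SVS⁻¹ = V'` for some nonsingular `S`;
(iii) `n = n'` and `RṼR⁻¹ = Ṽ'` for some nonsingular `(n+1) × (n+1)`
matrix `R`. -/
theorem LV_iso_iff_similar_iff_Vt_similar (F : Type*) [Field F]
    (hF : ∃ x y z : F, x ≠ y ∧ x ≠ z ∧ y ≠ z) (n n' : ℕ)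
    (V : Submodule F (Matrix (Fin n) (Fin n) F))
    (V' : Submodule F (Matrix (Fin n') (Fin n') F))
    (hV : ∀ A ∈ V, ∀ B ∈ V, A * B = B * A)
    (hV' : ∀ A ∈ V', ∀ B ∈ V', A * B = B * A)
    (hns : ∃ A ∈ V, IsUnit A) (hns' : ∃ A ∈ V', IsUnit A) :
    (Nonempty ((LV V hV) ≃ₗ⁅F⁆ (LV V' hV')) ↔
      (∃ h : n = n', ∃ S : Matrix (Fin n') (Fin n') F, IsUnit S ∧
        (fun A => S * (Matrix.reindex (finCongr h) (finCongr h) A) * S⁻¹) '' ↑V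
          = (↑V' : Set (Matrix (Fin n') (Fin n') F)))) ∧
    ((∃ h : n = n', ∃ S : Matrix (Fin n') (Fin n') F, IsUnit S ∧
        (fun A => S * (Matrix.reindex (finCongr h) (finCongr h) A) * S⁻¹) '' ↑V
          = (↑V' : Set (Matrix (Fin n') (Fin n') F))) ↔
      (∃ h : n = n', ∃ R : Matrix (Fin n' ⊕ Fin 1) (Fin n' ⊕ Fin 1) F,
        IsUnit R ∧
        (fun X => R *
            (Matrix.reindex (Equiv.sumCongr (finCongr h) (Equiv.refl (Fin 1)))
              (Equiv.sumCongr (finCongr h) (Equiv.refl (Fin 1))) X) * R⁻¹) ''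
          VtSet V = VtSet V')) := by
  refine ⟨⟨fun ⟨e⟩ => iso_to_ii hns hns' e, fun hii => iii_to_i (hV := hV) (hV' := hV') (ii_to_iii hii)⟩, ⟨fun hii => ii_to_iii hii, fun hiii => ?_⟩⟩
  obtain ⟨e⟩ := iii_to_i (hV := hV) (hV' := hV') hiii
  exact iso_to_ii hns hns' e
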